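/- Let A be a unital C*-algebra, H a complex Hilbert space, and φ : A → B(H) a unital completely positive map. Then the multiplicative domain md(φ) = {x ∈ A : φ(x*x) = φ(x)*φ(x) and φ(xx*) = φ(x)φ(x)*} is a unital *-subalgebra of A (it contains 1, and is closed under addition, scalar multiplication, multiplication, and the adjoint), and φ restricted to md(φ) is multiplicative: φ(xy) = φ(x)φ(y) for all x, y ∈ md(φ). -/

import Mathlib

open scoped ComplexOrder InnerProductSpace
open ComplexConjugate

/-- The multiplicative domain of a map `φ : A → B(H)`:
`{x : φ(x*x) = φ(x)*φ(x) and φ(xx*) = φ(x)φ(x)*}`. -/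
def multiplicativeDomain {A : Type*} [CStarAlgebra A]
    {H : Type*} [NormedAddCommGroup H] [InnerProductSpace ℂ H] [CompleteSpace H]
    (φ : A →ₗ[ℂ] (H →L[ℂ] H)) : Set A :=
  {x : A | φ (star x * x) = star (φ x) * φ x ∧ φ (x * star x) = φ x * star (φ x)}


set_option linter.unusedSectionVars false
section Aux
variable {A : Type*} [CStarAlgebra A]
    {H : Type*} [NormedAddCommGroup H] [InnerProductSpace ℂ H] [CompleteSpace H]
    (φ : A →ₗ[ℂ] (H →L[ℂ] H))

lemma aux_psd1
    (hcp : ∀ (n : ℕ) (x : Fin n → A) (ξ : Fin n → H),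
        0 ≤ ∑ i, ∑ j, (inner ℂ (ξ i) (φ (star (x i) * x j) (ξ j)) : ℂ))
    (x : A) (ξ : H) : 0 ≤ (⟪ξ, φ (star x * x) ξ⟫_ℂ) := by
  simpa using hcp 1 ![x] ![ξ]

lemma aux_saop
    (hcp : ∀ (n : ℕ) (x : Fin n → A) (ξ : Fin n → H),
        0 ≤ ∑ i, ∑ j, (inner ℂ (ξ i) (φ (star (x i) * x j) (ξ j)) : ℂ))
    (x : A) : IsSelfAdjoint (φ (star x * x)) := by
  rw [ContinuousLinearMap.isSelfAdjoint_iff_isSymmetric]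
  rw [LinearMap.isSymmetric_iff_inner_map_self_real]
  intro v
  have h := aux_psd1 φ hcp x v
  have him : (⟪v, φ (star x * x) v⟫_ℂ).im = 0 := by
    rw [Complex.le_def] at h; simpa using h.2.symm
  have : (⟪v, φ (star x * x) v⟫_ℂ) = conj (⟪v, φ (star x * x) v⟫_ℂ) :=
    (Complex.conj_eq_iff_im.mpr him).symm
  rw [inner_conj_symm]
  exact this.trans (inner_conj_symm _ _)

lemma aux_sa
    (hcp : ∀ (n : ℕ) (x : Fin n → A) (ξ : Fin n → H),
        0 ≤ ∑ i, ∑ j, (inner ℂ (ξ i) (φ (star (x i) * x j) (ξ j)) : ℂ))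
    (h : A) (hh : IsSelfAdjoint h) : IsSelfAdjoint (φ h) := by
  have key : φ h = (1/4 : ℂ) • (φ (star (1+h) * (1+h)) - φ (star (1-h) * (1-h))) := by
    rw [← map_sub, ← map_smul]
    congr 1
    have e : star (1+h) * (1+h) - star (1-h) * (1-h) = h + h + h + h := by
      rw [star_add, star_sub, star_one, hh.star_eq]
      noncomm_ring
    rw [e, show h + h + h + h = (4:ℕ) • h by abel, ← Nat.cast_smul_eq_nsmul ℂ,
      smul_smul]
    norm_num
  rw [key]
  have h4 : IsSelfAdjoint (1/4:ℂ) := by rw [IsSelfAdjoint, RCLike.star_def]; simp [Complex.ext_iff]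
  exact h4.smul ((aux_saop φ hcp (1+h)).sub (aux_saop φ hcp (1-h)))

lemma aux_star
    (hcp : ∀ (n : ℕ) (x : Fin n → A) (ξ : Fin n → H),
        0 ≤ ∑ i, ∑ j, (inner ℂ (ξ i) (φ (star (x i) * x j) (ξ j)) : ℂ))
    (a : A) : φ (star a) = star (φ a) := by
  have hP : IsSelfAdjoint (φ (a + star a)) := by
    refine aux_sa φ hcp _ ?_
    rw [IsSelfAdjoint, star_add, star_star, add_comm]
  have hQ : IsSelfAdjoint (φ (Complex.I • (a - star a))) := by
    refine aux_sa φ hcp _ ?_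
    rw [IsSelfAdjoint, star_smul, star_sub, star_star, RCLike.star_def, Complex.conj_I,
      neg_smul, smul_sub, neg_sub, ← smul_sub]
  have h1 := hP.star_eq
  rw [map_add, star_add] at h1
  have h2' := hQ.star_eq
  rw [map_smul, map_sub, star_smul, star_sub, RCLike.star_def, Complex.conj_I] at h2'
  have h2 : star (φ a) - star (φ (star a)) = φ (star a) - φ a := by
    have h3 := congrArg (fun z => Complex.I • z) h2'
    simp only [smul_neg, smul_smul, Complex.I_mul_I, neg_smul, one_smul, neg_neg] at h3
    rw [h3, neg_sub]
  have key : φ (star a) = (1/2 : ℂ) • ((star (φ a) + star (φ (star a)))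
      + (star (φ a) - star (φ (star a)))) := by
    rw [h1, h2]
    module
  rw [key]
  module

lemma aux_KS2
    (hcp : ∀ (n : ℕ) (x : Fin n → A) (ξ : Fin n → H),
        0 ≤ ∑ i, ∑ j, (inner ℂ (ξ i) (φ (star (x i) * x j) (ξ j)) : ℂ))
    (hunital : φ 1 = 1)
    (a b : A) (ξ η : H) :
    0 ≤ (⟪ξ, φ (star a * a) ξ⟫_ℂ - ⟪φ a ξ, φ a ξ⟫_ℂ)
      + (⟪ξ, φ (star a * b) η⟫_ℂ - ⟪φ a ξ, φ b η⟫_ℂ)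
      + (⟪η, φ (star b * a) ξ⟫_ℂ - ⟪φ b η, φ a ξ⟫_ℂ)
      + (⟪η, φ (star b * b) η⟫_ℂ - ⟪φ b η, φ b η⟫_ℂ) := by
  have key := hcp 3 ![1, a, b] ![-(φ a ξ + φ b η), ξ, η]
  refine le_of_le_of_eq key ?_
  simp only [Fin.sum_univ_three, Matrix.cons_val_zero, Matrix.cons_val_one, Matrix.head_cons,
    Matrix.cons_val_two, Matrix.tail_cons, star_one, one_mul, mul_one, hunital,
    ContinuousLinearMap.one_apply]
  rw [aux_star φ hcp a, aux_star φ hcp b]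
  simp only [ContinuousLinearMap.star_eq_adjoint, ContinuousLinearMap.adjoint_inner_right]
  simp only [inner_add_left, inner_add_right, inner_neg_left, inner_neg_right]
  ring

lemma aux_hadj2 (c d : A) (ζ w : H) :
    ⟪ζ, (star (φ c) * φ d) w⟫_ℂ = ⟪φ c ζ, φ d w⟫_ℂ := by
  rw [ContinuousLinearMap.mul_apply, ContinuousLinearMap.star_eq_adjoint,
    ContinuousLinearMap.adjoint_inner_right]

lemma aux_mul_left
    (hcp : ∀ (n : ℕ) (x : Fin n → A) (ξ : Fin n → H),
        0 ≤ ∑ i, ∑ j, (inner ℂ (ξ i) (φ (star (x i) * x j) (ξ j)) : ℂ))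
    (hunital : φ 1 = 1)
    (a : A) (ha : φ (star a * a) = star (φ a) * φ a) (b : A) :
    φ (star a * b) = star (φ a) * φ b := by
  have hba : φ (star b * a) = star (φ (star a * b)) := by
    rw [← aux_star φ hcp (star a * b), star_mul, star_star]
  have hRe : ∀ η ξ : H, (⟪ξ, φ (star a * b) η⟫_ℂ - ⟪φ a ξ, φ b η⟫_ℂ).re = 0 := by
    intro η ξ
    have hlin : ∀ t : ℝ, 0 ≤ t * (2 * (⟪ξ, φ (star a * b) η⟫_ℂ - ⟪φ a ξ, φ b η⟫_ℂ).re)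
        + (⟪η, φ (star b * b) η⟫_ℂ - ⟪φ b η, φ b η⟫_ℂ).re := by
      intro t
      have h2 := aux_KS2 φ hcp hunital a b ((t:ℂ) • ξ) η
      rw [ha, hba] at h2
      simp only [aux_hadj2] at h2
      simp only [map_smul, ContinuousLinearMap.map_smul,
        ContinuousLinearMap.star_eq_adjoint, ContinuousLinearMap.adjoint_inner_right,
        inner_smul_left, inner_smul_right, Complex.conj_ofReal] at h2
      rw [show ⟪(φ (star a * b)) η, ξ⟫_ℂ = conj ⟪ξ, (φ (star a * b)) η⟫_ℂ from
        (inner_conj_symm _ _).symm] at h2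
      rw [show ⟪(φ b) η, (φ a) ξ⟫_ℂ = conj ⟪(φ a) ξ, (φ b) η⟫_ℂ from
        (inner_conj_symm _ _).symm] at h2
      rw [Complex.le_def] at h2
      have h2re := h2.1
      simp only [Complex.zero_re, Complex.add_re, Complex.sub_re, Complex.mul_re,
        Complex.ofReal_re, Complex.ofReal_im, Complex.conj_re, Complex.conj_im,
        Complex.zero_im, zero_mul, mul_zero, sub_zero, zero_sub] at h2re ⊢
      linarith
    by_contra hne
    have h1 := hlin ((-(⟪η, φ (star b * b) η⟫_ℂ - ⟪φ b η, φ b η⟫_ℂ).re - 1) /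
      (2 * (⟪ξ, φ (star a * b) η⟫_ℂ - ⟪φ a ξ, φ b η⟫_ℂ).re))
    rw [mul_comm (2 : ℝ),
      div_mul_cancel₀ _ (mul_ne_zero hne two_ne_zero)] at h1
    linarith
  have core : ∀ η ξ : H, ⟪ξ, φ (star a * b) η⟫_ℂ - ⟪φ a ξ, φ b η⟫_ℂ = 0 := by
    intro η ξ
    apply Complex.ext
    · simpa using hRe η ξ
    · have h2 := hRe η (Complex.I • ξ)
      simp only [ContinuousLinearMap.map_smul, inner_smul_left, Complex.conj_I] at h2
      simp only [Complex.sub_re, Complex.sub_im, Complex.neg_re, Complex.neg_im,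
        Complex.mul_re, Complex.mul_im, Complex.I_re, Complex.I_im, Complex.zero_im,
        zero_mul, one_mul, mul_zero, zero_sub, sub_zero] at h2 ⊢
      linarith
  ext η
  have hv := core η (φ (star a * b) η - (star (φ a) * φ b) η)
  rw [← aux_hadj2 φ a b, ← inner_sub_right, inner_self_eq_zero, sub_eq_zero] at hv
  exact hv

end Aux

/-- Choi's multiplicative domain theorem: for a unital completely positive map
`φ : A → B(H)` on a unital C*-algebra, the multiplicative domain `md(φ)` is a unital
*-subalgebra of `A`, and `φ` restricted to it is multiplicative. -/
theorem choi_multiplicative_domain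
    {A : Type*} [CStarAlgebra A]
    {H : Type*} [NormedAddCommGroup H] [InnerProductSpace ℂ H] [CompleteSpace H]
    (φ : A →ₗ[ℂ] (H →L[ℂ] H)) (hunital : φ 1 = 1)
    (hcp : ∀ (n : ℕ) (x : Fin n → A) (ξ : Fin n → H),
        0 ≤ ∑ i, ∑ j, (inner ℂ (ξ i) (φ (star (x i) * x j) (ξ j)) : ℂ)) :
    (1 : A) ∈ multiplicativeDomain φ ∧
    (∀ x ∈ multiplicativeDomain φ, ∀ y ∈ multiplicativeDomain φ,
        x + y ∈ multiplicativeDomain φ) ∧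
    (∀ (c : ℂ), ∀ x ∈ multiplicativeDomain φ, c • x ∈ multiplicativeDomain φ) ∧
    (∀ x ∈ multiplicativeDomain φ, ∀ y ∈ multiplicativeDomain φ,
        x * y ∈ multiplicativeDomain φ) ∧
    (∀ x ∈ multiplicativeDomain φ, star x ∈ multiplicativeDomain φ) ∧
    (∀ x ∈ multiplicativeDomain φ, ∀ y ∈ multiplicativeDomain φ,
        φ (x * y) = φ x * φ y) := by
  have hstar := aux_star φ hcp
  have hC : ∀ x ∈ multiplicativeDomain φ, ∀ b, φ (x * b) = φ x * φ b := by
    intro x hx b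
    have h : φ (star (star x) * star x) = star (φ (star x)) * φ (star x) := by
      rw [star_star, hstar, star_star]
      exact hx.2
    have h2 := aux_mul_left φ hcp hunital (star x) h b
    rwa [star_star, hstar, star_star] at h2
  have hstarmem : ∀ x ∈ multiplicativeDomain φ, star x ∈ multiplicativeDomain φ := by
    intro x hx
    refine ⟨?_, ?_⟩
    · rw [star_star, hstar, star_star]
      exact hx.2
    · rw [star_star, hstar, star_star]
      exact hx.1
  refine ⟨⟨by simp [hunital], by simp [hunital]⟩, ?_, ?_, ?_, hstarmem, fun x hx y _ => hC x hx y⟩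
  · -- addition
    intro x hx y hy
    refine ⟨?_, ?_⟩
    · simp only [star_add, add_mul, mul_add, map_add, hC _ (hstarmem x hx),
        hC _ (hstarmem y hy), hstar, map_add, star_add]
    · simp only [star_add, add_mul, mul_add, map_add, hC _ hx, hC _ hy, hstar, map_add,
        star_add]
  · -- scalar multiplication
    intro c x hx
    refine ⟨?_, ?_⟩
    · simp only [star_smul, smul_mul_smul_comm, map_smul, hx.1]
    · simp only [star_smul, smul_mul_smul_comm, map_smul, hx.2]
  · -- multiplication
    intro x hx y hy
    refine ⟨?_, ?_⟩
    · simp only [star_mul, mul_assoc, hC _ (hstarmem y hy), hC _ (hstarmem x hx),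
        hC _ hx, hC _ hy, hstar]
    · simp only [star_mul, mul_assoc, hC _ hx, hC _ hy, hC _ (hstarmem y hy),
        hC _ (hstarmem x hx), hstar]
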